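/- Fix d ≥ 1 and α, β ∈ ℝ with α + β > (d-1)/2. Then for all λ, μ ∈ 𝒫_d, the one-layer Cauchy-type identity holds: ∫_{𝒫_d} |λκ^{-1}|^{-β} |μκ^{-1}|^{-α} exp(-tr[κλ^{-1} + κμ^{-1}]) dμ(κ) = ∫_{𝒫_d} |πλ^{-1}|^{-α} |πμ^{-1}|^{-β} exp(-tr[λπ^{-1} + μπ^{-1}]) dμ(π), and both integrals equal Γ_d(α+β) |λ|^α |μ|^β |λ+μ|^{-(α+β)}. -/

import Mathlib

open MeasureTheory ProbabilityTheory Matrix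

noncomputable section

namespace IWPoly

open scoped Classical

/-- The space of `d × d` real matrices. -/
abbrev Mat (d : ℕ) := Matrix (Fin d) (Fin d) ℝ

instance (d : ℕ) : MeasurableSpace (Mat d) :=
  inferInstanceAs (MeasurableSpace (Fin d → Fin d → ℝ))

/-- The symmetric matrix built from a collection of upper-triangular coordinates. -/
def symOfUpper (d : ℕ) (f : {p : Fin d × Fin d // p.1 ≤ p.2} → ℝ) : Mat d :=
  Matrix.of fun i j => if h : i ≤ j then f ⟨(i, j), h⟩ else f ⟨(j, i), le_of_not_ge h⟩

/-- The reference measure `μ` on `𝒫_d`, realized as a measure on all `d × d` matrices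
supported on the set of symmetric positive definite matrices, with density
`|x|^{-(d+1)/2}` with respect to the Lebesgue measure `∏_{i ≤ j} dx_{ij}`. -/
def muM (d : ℕ) : Measure (Mat d) :=
  (((volume : Measure ({p : Fin d × Fin d // p.1 ≤ p.2} → ℝ)).map (symOfUpper d)).restrict
      {x | x.PosDef}).withDensity fun x => ENNReal.ofReal (x.det ^ (-(((d : ℝ) + 1) / 2)))

/-- Square root of a positive semidefinite matrix (junk value `0` otherwise). -/
def msqrt {d : ℕ} (x : Mat d) : Mat d := if h : x.PosSemidef then
  h.1.eigenvectorUnitary.1 * diagonal ((↑) ∘ (√·) ∘ h.1.eigenvalues) *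
    (star h.1.eigenvectorUnitary : Mat d) else 0

/-- The product `x ⋆ y := y^{1/2} x y^{1/2}`. -/
def starProd {d : ℕ} (x y : Mat d) : Mat d := msqrt y * x * msqrt y

/-- The `d`-variate gamma function `Γ_d(θ) = ∫_{𝒫_d} |x|^θ e^{-tr x} dμ(x)`. -/
def GammaD (d : ℕ) (θ : ℝ) : ℝ := ∫ x : Mat d, x.det ^ θ * Real.exp (-x.trace) ∂ muM d

/-- The inverse-Wishart density `P⁻_θ` with respect to `μ`. -/
def Pminus (d : ℕ) (θ : ℝ) (x : Mat d) : ℝ :=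
  (GammaD d θ)⁻¹ * ((x⁻¹).det ^ θ * Real.exp (-(x⁻¹).trace))

/-- The Wishart density `P⁺_θ` with respect to `μ`. -/
def Pplus (d : ℕ) (θ : ℝ) (x : Mat d) : ℝ := Pminus d θ x⁻¹

/-- The inverse-Wishart distribution `Wis⁻¹(θ)`. -/
def invWishart (d : ℕ) (θ : ℝ) : Measure (Mat d) :=
  (muM d).withDensity fun x => ENNReal.ofReal (Pminus d θ x)

/-- The Wishart distribution `Wis(θ)`. -/
def wishart (d : ℕ) (θ : ℝ) : Measure (Mat d) :=
  (muM d).withDensity fun x => ENNReal.ofReal (Pplus d θ x)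

/-- The `d`-variate digamma function `ψ_d = (log Γ_d)'`. -/
def digammaD (d : ℕ) (θ : ℝ) : ℝ := deriv (fun t => Real.log (GammaD d t)) θ

end IWPoly


namespace S18
open IWPoly
open scoped ENNReal NNReal

variable (d : ℕ)

abbrev Idx := {p : Fin d × Fin d // p.1 ≤ p.2}
abbrev EE := Idx d → ℝ

/-- `symOfUpper` as a linear map. -/
def SL : EE d →ₗ[ℝ] Mat d where
  toFun := symOfUpper d
  map_add' f g := by
    ext i j
    simp only [symOfUpper, Matrix.of_apply, Matrix.add_apply, Pi.add_apply]
    split <;> rfl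
  map_smul' c f := by
    ext i j
    simp only [symOfUpper, Matrix.of_apply, Matrix.smul_apply, Pi.smul_apply, RingHom.id_apply]
    split <;> rfl

/-- The upper-triangular coordinates, as a linear map. -/
def upperL : Mat d →ₗ[ℝ] EE d where
  toFun x p := x p.1.1 p.1.2
  map_add' x y := rfl
  map_smul' c x := rfl

variable {d}

lemma SL_apply (u : EE d) : SL d u = symOfUpper d u := rfl

lemma upperL_SL (u : EE d) : upperL d (SL d u) = u := by
  funext p
  simp only [upperL, SL, symOfUpper, LinearMap.coe_mk, AddHom.coe_mk, Matrix.of_apply,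
    dif_pos p.2]
  exact dif_pos p.2

lemma isHermitian_SL (u : EE d) : (SL d u).IsHermitian := by
  show (SL d u)ᴴ = SL d u
  ext i j
  simp only [SL, symOfUpper, Matrix.conjTranspose_apply, LinearMap.coe_mk, AddHom.coe_mk,
    Matrix.of_apply, star_trivial]
  by_cases h : j ≤ i <;> by_cases h' : i ≤ j
  · have : j = i := le_antisymm h h'
    subst this; simp
  · simp only [dif_pos h, dif_neg h']
  · simp only [dif_neg h, dif_pos h']
  · exact absurd (le_of_not_ge h) h'

lemma SL_upperL {x : Mat d} (hx : x.IsHermitian) : SL d (upperL d x) = x := by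
  ext i j
  simp only [SL, upperL, symOfUpper, LinearMap.coe_mk, AddHom.coe_mk, Matrix.of_apply]
  split_ifs with h
  · rfl
  · exact hx.apply i j ▸ rfl


variable (d)

/-- Congruence by `g` as a linear map on matrices. -/
def congL (g : Mat d) : Mat d →ₗ[ℝ] Mat d where
  toFun x := g * x * gᴴ
  map_add' x y := by simp only [mul_add, add_mul]
  map_smul' c x := by simp only [Matrix.smul_mul, Matrix.mul_smul, RingHom.id_apply]

/-- The linear action on upper-triangular coordinates induced by `x ↦ g x gᴴ`. -/
def Tlin (g : Mat d) : EE d →ₗ[ℝ] EE d :=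
  (upperL d).comp ((congL d g).comp (SL d))

variable {d}

lemma isHermitian_conj {x : Mat d} (g : Mat d) (hx : x.IsHermitian) :
    (g * x * gᴴ).IsHermitian := by
  show (g * x * gᴴ)ᴴ = _
  rw [Matrix.conjTranspose_mul, Matrix.conjTranspose_mul, Matrix.conjTranspose_conjTranspose,
    hx.eq, Matrix.mul_assoc]

lemma Tlin_apply (g : Mat d) (u : EE d) :
    Tlin d g u = upperL d (g * SL d u * gᴴ) := rfl

lemma SL_Tlin (g : Mat d) (u : EE d) : SL d (Tlin d g u) = g * SL d u * gᴴ := by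
  rw [Tlin]
  exact SL_upperL (isHermitian_conj g (isHermitian_SL u))

lemma Tlin_mul (g h : Mat d) : Tlin d (g * h) = (Tlin d g).comp (Tlin d h) := by
  refine LinearMap.ext fun u => ?_
  rw [LinearMap.comp_apply, Tlin_apply, Tlin_apply, SL_Tlin]
  congr 1
  rw [Matrix.conjTranspose_mul]
  simp only [Matrix.mul_assoc]

lemma Tlin_one : Tlin d 1 = LinearMap.id := by
  refine LinearMap.ext fun u => ?_
  rw [Tlin_apply, Matrix.conjTranspose_one, Matrix.one_mul, Matrix.mul_one, upperL_SL]
  rfl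

lemma detTlin_mul (g h : Mat d) :
    LinearMap.det (Tlin d (g * h)) = LinearMap.det (Tlin d g) * LinearMap.det (Tlin d h) := by
  rw [Tlin_mul, LinearMap.det_comp]

lemma prod_pairs (v : Fin d → ℝ) :
    ∏ p : Idx d, (v p.1.1 * v p.1.2) = (∏ i, v i) ^ (d + 1) := by
  rw [Finset.prod_mul_distrib]
  have hs : ∀ p : Fin d × Fin d,
      p ∈ Finset.univ.filter (fun p : Fin d × Fin d => p.1 ≤ p.2) ↔ p.1 ≤ p.2 := by
    simp
  have hA : (∏ p : Idx d, v p.1.1) = ∏ i, v i ^ (d - i.val) := by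
    rw [← Finset.prod_subtype _ hs (fun p : Fin d × Fin d => v p.1)]
    rw [Finset.prod_finset_product _ Finset.univ (fun i => Finset.Ici i)
      (by simp [Finset.mem_Ici])]
    simp [Finset.prod_const, Fin.card_Ici]
  have hB : (∏ p : Idx d, v p.1.2) = ∏ i, v i ^ (i.val + 1) := by
    rw [← Finset.prod_subtype _ hs (fun p : Fin d × Fin d => v p.2)]
    rw [Finset.prod_finset_product_right _ Finset.univ (fun j => Finset.Iic j)
      (by simp [Finset.mem_Iic])]
    simp [Finset.prod_const, Fin.card_Iic]
  have key : ∀ i : Fin d, v i ^ (d - i.val) * v i ^ (i.val + 1) = v i ^ (d + 1) := by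
    intro i
    rw [← pow_add]
    congr 1
    have := i.isLt
    omega
  rw [hA, hB, ← Finset.prod_mul_distrib, Finset.prod_congr rfl fun i _ => key i,
    Finset.prod_pow]

lemma detTlin_diagonal (v : Fin d → ℝ) :
    LinearMap.det (Tlin d (Matrix.diagonal v)) = (Matrix.diagonal v).det ^ (d + 1) := by
  have hD : (Matrix.diagonal v)ᴴ = Matrix.diagonal v := by
    rw [Matrix.diagonal_conjTranspose]
    congr 1
  have : Tlin d (Matrix.diagonal v) =
      Matrix.toLin' (Matrix.diagonal (fun p : Idx d => v p.1.1 * v p.1.2)) := by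
    refine LinearMap.ext fun u => ?_
    funext p
    rw [Tlin_apply, hD]
    show (Matrix.diagonal v * SL d u * Matrix.diagonal v) p.1.1 p.1.2 = _
    rw [Matrix.mul_diagonal, Matrix.diagonal_mul, Matrix.toLin'_apply, Matrix.mulVec_diagonal]
    have : (SL d u) p.1.1 p.1.2 = u p := by
      simp only [SL, symOfUpper, LinearMap.coe_mk, AddHom.coe_mk, Matrix.of_apply, dif_pos p.2]
    rw [this]
    ring
  rw [this, LinearMap.det_toLin', Matrix.det_diagonal, Matrix.det_diagonal, prod_pairs]

lemma detTlin_isHermitian {g : Mat d} (hg : g.IsHermitian) :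
    LinearMap.det (Tlin d g) = g.det ^ (d + 1) := by
  set U : Mat d := (hg.eigenvectorUnitary : Mat d) with hUdef
  have hU : U * star U = 1 := Matrix.mem_unitaryGroup_iff.mp hg.eigenvectorUnitary.2
  set w : Fin d → ℝ := RCLike.ofReal ∘ hg.eigenvalues with hwdef
  have hspec : g = U * Matrix.diagonal w * star U := hg.spectral_theorem
  have hone : LinearMap.det (Tlin d U) * LinearMap.det (Tlin d (star U)) = 1 := by
    rw [← detTlin_mul, hU, Tlin_one, LinearMap.det_id]
  have hdetg : g.det = (Matrix.diagonal w).det := by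
    rw [hspec, Matrix.det_mul, Matrix.det_mul]
    have : U.det * (star U).det = 1 := by rw [← Matrix.det_mul, hU, Matrix.det_one]
    calc U.det * (Matrix.diagonal w).det * (star U).det
        = (Matrix.diagonal w).det * (U.det * (star U).det) := by ring
      _ = _ := by rw [this, mul_one]
  calc LinearMap.det (Tlin d g)
      = LinearMap.det (Tlin d U) * LinearMap.det (Tlin d (Matrix.diagonal w)) *
        LinearMap.det (Tlin d (star U)) := by rw [hspec, detTlin_mul, detTlin_mul]
    _ = LinearMap.det (Tlin d (Matrix.diagonal w)) *
        (LinearMap.det (Tlin d U) * LinearMap.det (Tlin d (star U))) := by ring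
    _ = (Matrix.diagonal w).det ^ (d + 1) := by rw [hone, mul_one, detTlin_diagonal]
    _ = g.det ^ (d + 1) := by rw [hdetg]


instance (d : ℕ) : BorelSpace (Mat d) := inferInstanceAs (BorelSpace (Fin d → Fin d → ℝ))

variable (d)

/-- The set of positive definite coordinate vectors. -/
def PDS : Set (EE d) := {u | (symOfUpper d u).PosDef}

lemma continuous_symOfUpper : Continuous (symOfUpper d) := by
  apply continuous_matrix
  intro i j
  by_cases h : i ≤ j
  · simpa only [symOfUpper, Matrix.of_apply, dif_pos h] using continuous_apply _
  · simpa only [symOfUpper, Matrix.of_apply, dif_neg h] using continuous_apply _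

lemma isOpen_posDefCone :
    IsOpen {A : Mat d | ∀ x : Fin d → ℝ, x ≠ 0 → 0 < x ⬝ᵥ (A *ᵥ x)} := by
  set K : Set (Fin d → ℝ) := Metric.sphere (0 : Fin d → ℝ) 1 with hK
  have hKc : IsCompact K := isCompact_sphere 0 1
  haveI : CompactSpace K := isCompact_iff_compactSpace.mp hKc
  set C : Set (Mat d) :=
    Prod.snd '' {p : K × Mat d | (p.1 : Fin d → ℝ) ⬝ᵥ (p.2 *ᵥ (p.1 : Fin d → ℝ)) ≤ 0} with hC
  have hCclosed : IsClosed C := by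
    apply isClosedMap_snd_of_compactSpace
    have hcont : Continuous fun p : K × Mat d =>
        (p.1 : Fin d → ℝ) ⬝ᵥ (p.2 *ᵥ (p.1 : Fin d → ℝ)) := by
      have h1 : Continuous fun p : K × Mat d => (p.1 : Fin d → ℝ) :=
        continuous_subtype_val.comp continuous_fst
      exact h1.dotProduct (continuous_snd.matrix_mulVec h1)
    exact isClosed_Iic.preimage hcont
  have hset : {A : Mat d | ∀ x : Fin d → ℝ, x ≠ 0 → 0 < x ⬝ᵥ (A *ᵥ x)} = Cᶜ := by
    ext A
    simp only [Set.mem_setOf_eq, Set.mem_compl_iff, hC, Set.mem_image, not_exists]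
    constructor
    · rintro h ⟨⟨x, hx⟩, B⟩ ⟨hle, rfl⟩
      have hx0 : x ≠ 0 := by
        intro h0
        rw [mem_sphere_zero_iff_norm, h0, norm_zero] at hx
        exact one_ne_zero hx.symm
      exact absurd hle (not_le.mpr (h x hx0))
    · intro h x hx0
      have hc : (0 : ℝ) < ‖x‖ := norm_pos_iff.mpr hx0
      set u : Fin d → ℝ := ‖x‖⁻¹ • x with hu
      have hu1 : u ∈ K := by
        rw [hK, mem_sphere_zero_iff_norm, hu, norm_smul, norm_inv, norm_norm,
          inv_mul_cancel₀ hc.ne']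
      have hupos : 0 < u ⬝ᵥ (A *ᵥ u) := by
        by_contra hle
        exact h ⟨⟨u, hu1⟩, A⟩ ⟨not_lt.mp hle, rfl⟩
      have hxu : x = ‖x‖ • u := by rw [hu, smul_inv_smul₀ hc.ne']
      have hcalc : x ⬝ᵥ (A *ᵥ x) = ‖x‖ * (‖x‖ * (u ⬝ᵥ (A *ᵥ u))) := by
        conv_lhs => rw [hxu]
        rw [smul_dotProduct, Matrix.mulVec_smul, dotProduct_smul]
        simp [smul_eq_mul]
      rw [hcalc]
      exact mul_pos hc (mul_pos hc hupos)
  rw [hset]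
  exact hCclosed.isOpen_compl

lemma posDef_iff_forall (A : Mat d) (hA : A.IsHermitian) :
    A.PosDef ↔ ∀ x : Fin d → ℝ, x ≠ 0 → 0 < x ⬝ᵥ (A *ᵥ x) := by
  constructor
  · intro h x hx
    simpa [star_trivial] using h.dotProduct_mulVec_pos hx
  · intro h
    exact Matrix.PosDef.of_dotProduct_mulVec_pos hA fun x hx => by simpa [star_trivial] using h x hx

lemma isOpen_PDS : IsOpen (PDS d) := by
  have : PDS d = symOfUpper d ⁻¹'
      {A : Mat d | ∀ x : Fin d → ℝ, x ≠ 0 → 0 < x ⬝ᵥ (A *ᵥ x)} := by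
    ext u
    simp only [PDS, Set.mem_setOf_eq, Set.mem_preimage]
    exact posDef_iff_forall d _ (isHermitian_SL u)
  rw [this]
  exact (isOpen_posDefCone d).preimage (continuous_symOfUpper d)

lemma measurableSet_posDef : MeasurableSet {x : Mat d | x.PosDef} := by
  have : {x : Mat d | x.PosDef} = {x : Mat d | x.IsHermitian} ∩
      {A : Mat d | ∀ x : Fin d → ℝ, x ≠ 0 → 0 < x ⬝ᵥ (A *ᵥ x)} := by
    ext A
    simp only [Set.mem_setOf_eq, Set.mem_inter_iff]
    constructor
    · intro h
      exact ⟨h.1, (posDef_iff_forall d A h.1).mp h⟩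
    · rintro ⟨h1, h2⟩
      exact (posDef_iff_forall d A h1).mpr h2
  rw [this]
  refine MeasurableSet.inter ?_ (isOpen_posDefCone d).measurableSet
  have : IsClosed {x : Mat d | x.IsHermitian} :=
    isClosed_eq continuous_id.matrix_conjTranspose continuous_id
  exact this.measurableSet

/-- The density function. -/
def wfun : Mat d → ℝ := fun x => x.det ^ (-(((d : ℝ) + 1) / 2))

lemma measurable_wfun : Measurable (wfun d) :=
  (continuous_id.matrix_det.measurable).pow measurable_const

lemma wfun_nonneg {x : Mat d} (hx : x.PosDef) : 0 ≤ wfun d x :=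
  Real.rpow_nonneg hx.det_pos.le _

lemma measurable_symOfUpper : Measurable (symOfUpper d) :=
  (continuous_symOfUpper d).measurable

lemma integral_muM_eq (f : Mat d → ℝ) (hf : Measurable f) :
    ∫ x, f x ∂ muM d
      = ∫ u in PDS d, wfun d (symOfUpper d u) * f (symOfUpper d u) := by
  have hP : MeasurableSet {x : Mat d | x.PosDef} := measurableSet_posDef d
  have hg : Measurable fun x : Mat d => (Real.toNNReal (wfun d x)) • f x := by
    have : (fun x : Mat d => (Real.toNNReal (wfun d x)) • f x)
        = fun x : Mat d => ((Real.toNNReal (wfun d x) : ℝ)) * f x := by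
      funext x; rw [NNReal.smul_def, smul_eq_mul]
    rw [this]
    exact ((measurable_wfun d).real_toNNReal.coe_nnreal_real).mul hf
  rw [muM]
  rw [show (fun x : Mat d => ENNReal.ofReal (x.det ^ (-(((d : ℝ) + 1) / 2))))
      = (fun x : Mat d => ((Real.toNNReal (wfun d x) : ℝ≥0) : ℝ≥0∞)) from rfl]
  rw [integral_withDensity_eq_integral_smul (measurable_wfun d).real_toNNReal f]
  rw [setIntegral_map hP hg.aestronglyMeasurable (measurable_symOfUpper d).aemeasurable]
  refine setIntegral_congr_fun (isOpen_PDS d).measurableSet fun u hu => ?_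
  have hpos : (symOfUpper d u).PosDef := hu
  rw [NNReal.smul_def, smul_eq_mul, Real.coe_toNNReal _ (wfun_nonneg d hpos)]


variable {d}

lemma posDef_of_posSemidef_isUnit {B : Mat d} (hB : B.PosSemidef) (hdet : IsUnit B.det) :
    B.PosDef := by
  refine Matrix.PosDef.of_dotProduct_mulVec_pos hB.1 fun x hx =>
    lt_of_le_of_ne ((posSemidef_iff_dotProduct_mulVec.mp hB).2 x) fun h0 => hx ?_
  have hz : B *ᵥ x = 0 := (hB.dotProduct_mulVec_zero_iff x).mp h0.symm
  have hinj : Function.Injective (B.mulVec) :=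
    Matrix.mulVec_injective_iff_isUnit.mpr ((Matrix.isUnit_iff_isUnit_det B).mpr hdet)
  have := hinj (hz.trans (Matrix.mulVec_zero B).symm)
  exact this

lemma isUnit_det_of_posDef {x : Mat d} (hx : x.PosDef) : IsUnit x.det :=
  isUnit_iff_ne_zero.mpr hx.det_pos.ne'

lemma posDef_conj {x : Mat d} (g : Mat d) (hx : x.PosDef) (hg : IsUnit g.det) :
    (g * x * gᴴ).PosDef := by
  refine posDef_of_posSemidef_isUnit (hx.posSemidef.mul_mul_conjTranspose_same g) ?_
  rw [Matrix.det_mul, Matrix.det_mul, Matrix.det_conjTranspose, star_trivial]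
  exact (hg.mul (isUnit_det_of_posDef hx)).mul hg

lemma Tlin_leftInv {g : Mat d} (hg : IsUnit g.det) (u : EE d) :
    Tlin d g⁻¹ (Tlin d g u) = u := by
  have : Tlin d g⁻¹ (Tlin d g u) = Tlin d (g⁻¹ * g) u := by rw [Tlin_mul]; rfl
  rw [this, Matrix.nonsing_inv_mul g hg, Tlin_one]
  rfl

lemma mem_PDS_Tlin {g : Mat d} (hg : IsUnit g.det) {u : EE d} (hu : u ∈ PDS d) :
    Tlin d g u ∈ PDS d := by
  have : symOfUpper d (Tlin d g u) = g * symOfUpper d u * gᴴ := SL_Tlin g u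
  show (symOfUpper d (Tlin d g u)).PosDef
  rw [this]
  exact posDef_conj g hu hg

lemma Tlin_image_PDS {g : Mat d} (hg : IsUnit g.det) :
    (fun u => Tlin d g u) '' PDS d = PDS d := by
  apply Set.Subset.antisymm
  · rintro _ ⟨u, hu, rfl⟩
    exact mem_PDS_Tlin hg hu
  · intro u hu
    have hginv : IsUnit g⁻¹.det := by
      rw [Matrix.det_nonsing_inv, Ring.inverse_eq_inv]
      exact hg.inv
    refine ⟨Tlin d g⁻¹ u, mem_PDS_Tlin hginv hu, ?_⟩
    show Tlin d g (Tlin d g⁻¹ u) = u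
    have : Tlin d g (Tlin d g⁻¹ u) = Tlin d (g * g⁻¹) u := by rw [Tlin_mul]; rfl
    rw [this, Matrix.mul_nonsing_inv g hg, Tlin_one]
    rfl

/-- Linear change of variables for the congruence action on the positive-definite cone. -/
lemma setIntegral_Tlin {g : Mat d} (hg : IsUnit g.det) (F : EE d → ℝ) :
    ∫ u in PDS d, F u = ∫ u in PDS d, |LinearMap.det (Tlin d g)| * F (Tlin d g u) := by
  have hinj : Set.InjOn (fun u => Tlin d g u) (PDS d) := by
    intro u _ v _ h
    have := congrArg (Tlin d g⁻¹) h
    simpa [Tlin_leftInv hg] using this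
  have hfd : ∀ x ∈ PDS d, HasFDerivWithinAt (fun u => Tlin d g u)
      (LinearMap.toContinuousLinearMap (Tlin d g)) (PDS d) x :=
    fun x _ => (LinearMap.toContinuousLinearMap (Tlin d g)).hasFDerivAt.hasFDerivWithinAt
  have key := integral_image_eq_integral_abs_det_fderiv_smul volume
    (isOpen_PDS d).measurableSet hfd hinj F
  rw [Tlin_image_PDS hg] at key
  rw [key]
  refine setIntegral_congr_fun (isOpen_PDS d).measurableSet fun u _ => ?_
  rw [smul_eq_mul]
  rfl

section Deriv

attribute [local instance] Matrix.linftyOpNormedAddCommGroup Matrix.linftyOpNormedRing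
  Matrix.linftyOpNormedAlgebra

noncomputable local instance (d : ℕ) : CompleteSpace (Mat d) := FiniteDimensional.complete ℝ _

/-- The matrix-inversion map on upper-triangular coordinates. -/
def invE (d : ℕ) : EE d → EE d := fun u => upperL d ((symOfUpper d u)⁻¹)

lemma hasFDerivWithinAt_invE {u : EE d} (hu : u ∈ PDS d) :
    HasFDerivWithinAt (invE d)
      (LinearMap.toContinuousLinearMap (-(Tlin d ((symOfUpper d u)⁻¹)))) (PDS d) u := by
  set x : Mat d := symOfUpper d u with hxdef
  have hx : x.PosDef := hu
  have hxu : IsUnit x := (Matrix.isUnit_iff_isUnit_det x).mpr (isUnit_det_of_posDef hx)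
  have hdet : IsUnit x.det := isUnit_det_of_posDef hx
  set xu : (Mat d)ˣ := ⟨x, x⁻¹, Matrix.mul_nonsing_inv x hdet, Matrix.nonsing_inv_mul x hdet⟩
    with hxu_def
  have h1 : HasFDerivAt (fun A : Mat d => Ring.inverse A)
      (-(ContinuousLinearMap.mulLeftRight ℝ (Mat d) x⁻¹ x⁻¹)) x :=
    hasFDerivAt_ringInverse (𝕜 := ℝ) xu
  have h2 : HasFDerivAt (fun v : EE d => SL d v) (LinearMap.toContinuousLinearMap (SL d)) u :=
    (LinearMap.toContinuousLinearMap (SL d)).hasFDerivAt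
  have h3 : HasFDerivAt (fun A : Mat d => upperL d A)
      (LinearMap.toContinuousLinearMap (upperL d)) ((fun A : Mat d => Ring.inverse A) (SL d u)) :=
    (LinearMap.toContinuousLinearMap (upperL d)).hasFDerivAt
  have h4 := h3.comp u (h1.comp u h2)
  have hfun : (fun v : EE d => upperL d (Ring.inverse (SL d v))) = invE d := by
    funext v
    rw [invE, ← Matrix.nonsing_inv_eq_ringInverse]
    rfl
  have hclm : (LinearMap.toContinuousLinearMap (upperL d)).comp
      ((-(ContinuousLinearMap.mulLeftRight ℝ (Mat d) x⁻¹ x⁻¹)).comp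
        (LinearMap.toContinuousLinearMap (SL d)))
      = LinearMap.toContinuousLinearMap (-(Tlin d x⁻¹)) := by
    refine ContinuousLinearMap.ext fun h => ?_
    show upperL d ((-(ContinuousLinearMap.mulLeftRight ℝ (Mat d) x⁻¹ x⁻¹)) (SL d h))
        = -(Tlin d x⁻¹ h)
    rw [ContinuousLinearMap.neg_apply, ContinuousLinearMap.mulLeftRight_apply, map_neg]
    rw [Tlin_apply, (hx.1.inv).eq]
  have h5 : HasFDerivAt (invE d) (LinearMap.toContinuousLinearMap (-(Tlin d x⁻¹))) u := by
    rw [← hfun, ← hclm]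
    exact h4
  exact h5.hasFDerivWithinAt

end Deriv


lemma symOfUpper_invE {u : EE d} (hu : u ∈ PDS d) :
    symOfUpper d (invE d u) = (symOfUpper d u)⁻¹ := by
  have hpd : (symOfUpper d u).PosDef := hu
  exact SL_upperL hpd.1.inv

lemma invE_invE {u : EE d} (hu : u ∈ PDS d) : invE d (invE d u) = u := by
  have hpd : (symOfUpper d u).PosDef := hu
  rw [invE, symOfUpper_invE hu,
    Matrix.nonsing_inv_nonsing_inv _ (isUnit_det_of_posDef hpd)]
  exact upperL_SL u

lemma mem_PDS_invE {u : EE d} (hu : u ∈ PDS d) : invE d u ∈ PDS d := by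
  have hpd : (symOfUpper d u).PosDef := hu
  show (symOfUpper d (invE d u)).PosDef
  rw [symOfUpper_invE hu]
  exact hpd.inv

lemma invE_image_PDS : invE d '' PDS d = PDS d := by
  apply Set.Subset.antisymm
  · rintro _ ⟨u, hu, rfl⟩
    exact mem_PDS_invE hu
  · intro u hu
    exact ⟨invE d u, mem_PDS_invE hu, invE_invE hu⟩

lemma abs_det_neg (f : EE d →ₗ[ℝ] EE d) : |LinearMap.det (-f)| = |LinearMap.det f| := by
  rw [← neg_one_smul ℝ f, LinearMap.det_smul, abs_mul, abs_pow, abs_neg, abs_one, one_pow,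
    one_mul]

lemma pow_mul_rpow_half {y : ℝ} (hy : 0 < y) (d : ℕ) :
    y ^ (d + 1) * y ^ (-(((d : ℝ) + 1) / 2)) = y ^ ((((d : ℝ) + 1)) / 2) := by
  rw [← Real.rpow_natCast y (d + 1), ← Real.rpow_add hy]
  congr 1
  push_cast
  ring

/-- Inversion invariance of the measure `μ`. -/
lemma keyB (G : Mat d → ℝ) :
    ∫ u in PDS d, wfun d (symOfUpper d u) * G (symOfUpper d u)
      = ∫ u in PDS d, wfun d (symOfUpper d u) * G ((symOfUpper d u)⁻¹) := by
  have hinj : Set.InjOn (invE d) (PDS d) := by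
    intro u hu v hv h
    have := congrArg (invE d) h
    rwa [invE_invE hu, invE_invE hv] at this
  have key := integral_image_eq_integral_abs_det_fderiv_smul volume
    (isOpen_PDS d).measurableSet
    (f' := fun u => LinearMap.toContinuousLinearMap (-(Tlin d ((symOfUpper d u)⁻¹))))
    (fun u hu => hasFDerivWithinAt_invE hu) hinj
    (fun u => wfun d (symOfUpper d u) * G (symOfUpper d u))
  rw [invE_image_PDS] at key
  rw [key]
  refine setIntegral_congr_fun (isOpen_PDS d).measurableSet fun u hu => ?_
  have hpd : (symOfUpper d u).PosDef := hu
  have hDx : 0 < (symOfUpper d u).det := hpd.det_pos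
  rw [smul_eq_mul, symOfUpper_invE hu]
  have hJ : |(LinearMap.toContinuousLinearMap (-(Tlin d ((symOfUpper d u)⁻¹)))).det|
      = ((symOfUpper d u).det⁻¹) ^ (d + 1) := by
    have h1 : (LinearMap.toContinuousLinearMap (-(Tlin d ((symOfUpper d u)⁻¹)))).det
        = LinearMap.det (-(Tlin d ((symOfUpper d u)⁻¹))) := rfl
    rw [h1, abs_det_neg, detTlin_isHermitian hpd.1.inv, abs_pow, Matrix.det_nonsing_inv,
      Ring.inverse_eq_inv, abs_of_pos (inv_pos.mpr hDx)]
  rw [hJ, ← mul_assoc]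
  congr 1
  have hwinv : wfun d ((symOfUpper d u)⁻¹)
      = ((symOfUpper d u).det⁻¹) ^ (-(((d : ℝ) + 1) / 2)) := by
    rw [wfun, Matrix.det_nonsing_inv, Ring.inverse_eq_inv]
  rw [hwinv, pow_mul_rpow_half (inv_pos.mpr hDx), Real.inv_rpow hDx.le,
    ← Real.rpow_neg hDx.le]
  rfl

lemma rpow_combine {t Dx : ℝ} (ht : 0 < t) (hDx : 0 < Dx) (e θ c : ℝ) :
    t ^ (e / 2) * ((t * Dx) ^ (-(e / 2)) * ((t * Dx) ^ θ * c))
      = t ^ θ * (Dx ^ (-(e / 2)) * (Dx ^ θ * c)) := by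
  rw [Real.mul_rpow ht.le hDx.le, Real.mul_rpow ht.le hDx.le]
  rw [show t ^ (e / 2) * (t ^ (-(e / 2)) * Dx ^ (-(e / 2)) * (t ^ θ * Dx ^ θ * c))
      = (t ^ (e / 2) * t ^ (-(e / 2))) * (t ^ θ * (Dx ^ (-(e / 2)) * (Dx ^ θ * c))) from by ring]
  rw [← Real.rpow_add ht, add_neg_cancel, Real.rpow_zero, one_mul]

lemma abs_detTlin_sq {s : Mat d} (hs : s.IsHermitian) {t : ℝ} (ht : 0 < t)
    (h2 : s.det * s.det = t) : |LinearMap.det (Tlin d s)| = t ^ (((d : ℝ) + 1) / 2) := by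
  rw [detTlin_isHermitian hs, abs_pow]
  have habs2 : |s.det| ^ (2 : ℝ) = t := by
    rw [show (2 : ℝ) = ((2 : ℕ) : ℝ) by norm_num, Real.rpow_natCast, sq_abs, sq, h2]
  calc |s.det| ^ (d + 1) = |s.det| ^ (((d + 1 : ℕ) : ℝ)) := (Real.rpow_natCast _ _).symm
    _ = (|s.det| ^ (2 : ℝ)) ^ ((((d : ℝ) + 1)) / 2) := by
        rw [← Real.rpow_mul (abs_nonneg _)]
        congr 1
        push_cast
        ring
    _ = t ^ ((((d : ℝ) + 1)) / 2) := by rw [habs2]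

open scoped MatrixOrder in
/-- Scaling property of the Laplace-type integral. -/
lemma keyA (θ : ℝ) {a : Mat d} (ha : a.PosDef) :
    ∫ u in PDS d, wfun d (symOfUpper d u) * ((symOfUpper d u).det ^ θ *
        Real.exp (-((symOfUpper d u) * a).trace))
      = a.det ^ (-θ) * ∫ u in PDS d, wfun d (symOfUpper d u) * ((symOfUpper d u).det ^ θ *
        Real.exp (-(symOfUpper d u).trace)) := by
  have hadet : 0 < a.det := ha.det_pos
  have htp : 0 < (a.det)⁻¹ := inv_pos.mpr hadet
  set s : Mat d := CFC.sqrt a⁻¹ with hsdef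
  have hsherm : s.IsHermitian := (Matrix.nonneg_iff_posSemidef.mp (CFC.sqrt_nonneg _)).1
  have hss : s * s = a⁻¹ :=
    CFC.sqrt_mul_sqrt_self a⁻¹ (Matrix.nonneg_iff_posSemidef.mpr ha.inv.posSemidef)
  have hdets2 : s.det * s.det = (a.det)⁻¹ := by
    rw [← Matrix.det_mul, hss, Matrix.det_nonsing_inv, Ring.inverse_eq_inv]
  have hsu : IsUnit s.det := by
    refine isUnit_iff_ne_zero.mpr fun h0 => ?_
    rw [h0, zero_mul] at hdets2
    exact htp.ne hdets2
  have hsas : s * a * s = 1 := by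
    have ha' : a = (s * s)⁻¹ := by
      rw [hss, Matrix.nonsing_inv_nonsing_inv _ (isUnit_det_of_posDef ha)]
    rw [ha', Matrix.mul_inv_rev, ← Matrix.mul_assoc, Matrix.mul_assoc (s * s⁻¹),
      Matrix.mul_nonsing_inv _ hsu, Matrix.nonsing_inv_mul _ hsu, Matrix.mul_one]
  rw [setIntegral_Tlin hsu, ← MeasureTheory.integral_const_mul]
  refine setIntegral_congr_fun (isOpen_PDS d).measurableSet fun u hu => ?_
  have hpd : (symOfUpper d u).PosDef := hu
  have hDx : 0 < (symOfUpper d u).det := hpd.det_pos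
  have hS : symOfUpper d (Tlin d s u) = s * symOfUpper d u * s := by
    rw [show symOfUpper d (Tlin d s u) = s * symOfUpper d u * sᴴ from SL_Tlin s u, hsherm.eq]
  have hdet3 : (s * symOfUpper d u * s).det = (a.det)⁻¹ * (symOfUpper d u).det := by
    rw [Matrix.det_mul, Matrix.det_mul]
    rw [show s.det * (symOfUpper d u).det * s.det
        = (s.det * s.det) * (symOfUpper d u).det from by ring, hdets2]
  have htr : (s * symOfUpper d u * s * a).trace = (symOfUpper d u).trace := by
    have e1 : s * symOfUpper d u * s * a = s * (symOfUpper d u * (s * a)) := by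
      simp only [Matrix.mul_assoc]
    rw [e1, Matrix.trace_mul_comm]
    have e2 : symOfUpper d u * (s * a) * s = symOfUpper d u * (s * (a * s)) := by
      simp only [Matrix.mul_assoc]
    have e3 : s * (a * s) = 1 := by rw [← Matrix.mul_assoc]; exact hsas
    rw [e2, e3, Matrix.mul_one]
  simp only [wfun]
  rw [abs_detTlin_sq hsherm htp hdets2, hS, hdet3, htr]
  rw [rpow_combine htp hDx ((d : ℝ) + 1) θ _]
  rw [Real.inv_rpow hadet.le, ← Real.rpow_neg hadet.le]


lemma measurable_matrix_inv : Measurable (fun κ : Mat d => κ⁻¹) := by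
  have hdef : (fun κ : Mat d => κ⁻¹) = fun κ => Ring.inverse κ.det • κ.adjugate := by
    funext κ; exact Matrix.inv_def κ
  rw [hdef]
  refine measurable_pi_lambda _ fun i => measurable_pi_lambda _ fun j => ?_
  have hentry : (fun κ : Mat d => (Ring.inverse κ.det • κ.adjugate) i j)
      = fun κ : Mat d => (κ.det)⁻¹ * κ.adjugate i j := by
    funext κ
    rw [Matrix.smul_apply, Ring.inverse_eq_inv, smul_eq_mul]
  rw [hentry]
  have hadj : Continuous fun κ : Mat d => κ.adjugate i j :=
    (continuous_apply j).comp ((continuous_apply i).comp continuous_id.matrix_adjugate)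
  exact (continuous_id.matrix_det.measurable.inv).mul hadj.measurable

lemma GammaD_eq (θ : ℝ) :
    GammaD d θ = ∫ u in PDS d, wfun d (symOfUpper d u) *
      ((symOfUpper d u).det ^ θ * Real.exp (-(symOfUpper d u).trace)) := by
  rw [GammaD]
  exact integral_muM_eq d _
    ((continuous_id.matrix_det.measurable.pow measurable_const).mul
      (Real.measurable_exp.comp continuous_id.matrix_trace.measurable.neg))

lemma inv_det_rpow_neg {x : Mat d} (hx : 0 < x.det) (γ : ℝ) :
    (x⁻¹.det) ^ (-γ) = x.det ^ γ := by
  rw [Matrix.det_nonsing_inv, Ring.inverse_eq_inv, Real.inv_rpow hx.le,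
    Real.rpow_neg hx.le, inv_inv]

lemma scalar1 {L M S : ℝ} (hL : 0 < L) (hM : 0 < M) (hS : 0 < S) (α β : ℝ) :
    L ^ (-β) * M ^ (-α) * (L⁻¹ * (S * M⁻¹)) ^ (-(α + β))
      = L ^ α * M ^ β * S ^ (-(α + β)) := by
  have e1 : (L⁻¹ * (S * M⁻¹)) ^ (-(α + β))
      = L ^ (α + β) * (S ^ (-(α + β)) * M ^ (α + β)) := by
    rw [Real.mul_rpow (by positivity) (by positivity),
      Real.mul_rpow hS.le (by positivity), Real.inv_rpow hL.le, Real.inv_rpow hM.le,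
      Real.rpow_neg hL.le, Real.rpow_neg hM.le, inv_inv, inv_inv]
  rw [e1, show L ^ (-β) * M ^ (-α) * (L ^ (α + β) * (S ^ (-(α + β)) * M ^ (α + β)))
      = (L ^ (-β) * L ^ (α + β)) * ((M ^ (-α) * M ^ (α + β)) * S ^ (-(α + β))) from by ring,
    ← Real.rpow_add hL, ← Real.rpow_add hM, show -β + (α + β) = α from by ring,
    show -α + (α + β) = β from by ring]
  ring

lemma det_mul_inv_rpow_neg {x : Mat d} (hx : x.PosDef) {L : ℝ} (hL : 0 < L) (γ : ℝ) :
    (L * (x⁻¹).det) ^ (-γ) = L ^ (-γ) * x.det ^ γ := by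
  rw [Matrix.det_nonsing_inv, Ring.inverse_eq_inv,
    Real.mul_rpow hL.le (inv_nonneg.mpr hx.det_pos.le), Real.inv_rpow hx.det_pos.le,
    Real.rpow_neg hx.det_pos.le, inv_inv]

lemma det_inv_mul_rpow_neg {x : Mat d} (hx : x.PosDef) {lmat : Mat d} (hlm : 0 < lmat.det)
    (γ : ℝ) : (x.det * (lmat⁻¹).det) ^ (-γ) = x.det ^ (-γ) * lmat.det ^ γ := by
  rw [Matrix.det_nonsing_inv, Ring.inverse_eq_inv,
    Real.mul_rpow hx.det_pos.le (inv_nonneg.mpr hlm.le),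
    Real.inv_rpow hlm.le, Real.rpow_neg hlm.le, inv_inv]

end S18

open S18

open IWPoly in
/-- One-layer Cauchy-type identity: for `α + β > (d-1)/2` and
`λ, μ ∈ 𝒫_d`, both integrals
`∫ |λκ⁻¹|^{-β} |μκ⁻¹|^{-α} e^{-tr[κλ⁻¹ + κμ⁻¹]} dμ(κ)` and
`∫ |πλ⁻¹|^{-α} |πμ⁻¹|^{-β} e^{-tr[λπ⁻¹ + μπ⁻¹]} dμ(π)` equal
`Γ_d(α+β) |λ|^α |μ|^β |λ+μ|^{-(α+β)}`. -/
theorem statement18 (d : ℕ) (hd : 1 ≤ d) (α β : ℝ) (h : ((d : ℝ) - 1) / 2 < α + β)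
    (l m : Mat d) (hl : l.PosDef) (hm : m.PosDef) :
    (∫ κ : Mat d,
        (l * κ⁻¹).det ^ (-β) * (m * κ⁻¹).det ^ (-α) *
          Real.exp (-((κ * l⁻¹).trace + (κ * m⁻¹).trace)) ∂ muM d) =
      GammaD d (α + β) * l.det ^ α * m.det ^ β * (l + m).det ^ (-(α + β)) ∧
    (∫ π : Mat d,
        (π * l⁻¹).det ^ (-α) * (π * m⁻¹).det ^ (-β) *
          Real.exp (-((l * π⁻¹).trace + (m * π⁻¹).trace)) ∂ muM d) =
      GammaD d (α + β) * l.det ^ α * m.det ^ β * (l + m).det ^ (-(α + β)) := by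

  have hld : 0 < l.det := hl.det_pos
  have hmd : 0 < m.det := hm.det_pos
  have hlu : IsUnit l.det := isUnit_det_of_posDef hl
  have hmu : IsUnit m.det := isUnit_det_of_posDef hm
  have hb : (l + m).PosDef := hl.add hm
  have hbd : 0 < (l + m).det := hb.det_pos
  constructor
  · -- first integral
    have ha : (l⁻¹ + m⁻¹).PosDef := hl.inv.add hm.inv
    have hmeas1 : Measurable (fun κ : Mat d => (l * κ⁻¹).det ^ (-β) * (m * κ⁻¹).det ^ (-α) *
        Real.exp (-((κ * l⁻¹).trace + (κ * m⁻¹).trace))) := by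
      have h1 : Measurable fun κ : Mat d => (l * κ⁻¹).det ^ (-β) :=
        (((continuous_const.matrix_mul continuous_id).matrix_det.measurable).comp
          measurable_matrix_inv).pow measurable_const
      have h2 : Measurable fun κ : Mat d => (m * κ⁻¹).det ^ (-α) :=
        (((continuous_const.matrix_mul continuous_id).matrix_det.measurable).comp
          measurable_matrix_inv).pow measurable_const
      have h3 : Measurable fun κ : Mat d =>
          Real.exp (-((κ * l⁻¹).trace + (κ * m⁻¹).trace)) :=
        Real.measurable_exp.comp
          (((continuous_id.matrix_mul continuous_const).matrix_trace.measurable).add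
            ((continuous_id.matrix_mul continuous_const).matrix_trace.measurable)).neg
      exact (h1.mul h2).mul h3
    rw [integral_muM_eq d _ hmeas1]
    have hstep : Set.EqOn
        (fun u => wfun d (symOfUpper d u) * ((l * (symOfUpper d u)⁻¹).det ^ (-β) *
          (m * (symOfUpper d u)⁻¹).det ^ (-α) *
          Real.exp (-((symOfUpper d u * l⁻¹).trace + (symOfUpper d u * m⁻¹).trace))))
        (fun u => (l.det ^ (-β) * m.det ^ (-α)) * (wfun d (symOfUpper d u) *
          ((symOfUpper d u).det ^ (α + β) *
            Real.exp (-(symOfUpper d u * (l⁻¹ + m⁻¹)).trace))))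
        (PDS d) := by
      intro u hu
      have hpd : (symOfUpper d u).PosDef := hu
      simp only
      rw [Matrix.det_mul, Matrix.det_mul,
        det_mul_inv_rpow_neg hpd hld β, det_mul_inv_rpow_neg hpd hmd α,
        Matrix.mul_add, Matrix.trace_add, Real.rpow_add hpd.det_pos α β]
      ring
    rw [setIntegral_congr_fun (isOpen_PDS d).measurableSet hstep]
    rw [MeasureTheory.integral_const_mul, keyA (α + β) ha, ← GammaD_eq]
    have haeq : l⁻¹ + m⁻¹ = l⁻¹ * ((l + m) * m⁻¹) := by
      rw [Matrix.add_mul, Matrix.mul_add, Matrix.mul_nonsing_inv m hmu, Matrix.mul_one,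
        ← Matrix.mul_assoc, Matrix.nonsing_inv_mul l hlu, Matrix.one_mul, add_comm]
    have hadet : (l⁻¹ + m⁻¹).det = l.det⁻¹ * ((l + m).det * m.det⁻¹) := by
      rw [haeq, Matrix.det_mul, Matrix.det_mul, Matrix.det_nonsing_inv,
        Matrix.det_nonsing_inv, Ring.inverse_eq_inv, Ring.inverse_eq_inv]
    rw [hadet]
    rw [show l.det ^ (-β) * m.det ^ (-α) *
        ((l.det⁻¹ * ((l + m).det * m.det⁻¹)) ^ (-(α + β)) * GammaD d (α + β))
        = (l.det ^ (-β) * m.det ^ (-α) * (l.det⁻¹ * ((l + m).det * m.det⁻¹)) ^ (-(α + β))) *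
          GammaD d (α + β) from by ring,
      scalar1 hld hmd hbd α β]
    ring
  · -- second integral
    have hmeas2 : Measurable (fun π : Mat d => (π * l⁻¹).det ^ (-α) * (π * m⁻¹).det ^ (-β) *
        Real.exp (-((l * π⁻¹).trace + (m * π⁻¹).trace))) := by
      have h1 : Measurable fun π : Mat d => (π * l⁻¹).det ^ (-α) :=
        ((continuous_id.matrix_mul continuous_const).matrix_det.measurable).pow
          measurable_const
      have h2 : Measurable fun π : Mat d => (π * m⁻¹).det ^ (-β) :=
        ((continuous_id.matrix_mul continuous_const).matrix_det.measurable).pow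
          measurable_const
      have h3 : Measurable fun π : Mat d =>
          Real.exp (-((l * π⁻¹).trace + (m * π⁻¹).trace)) :=
        Real.measurable_exp.comp
          ((((continuous_const.matrix_mul continuous_id).matrix_trace.measurable).comp
              measurable_matrix_inv).add
            (((continuous_const.matrix_mul continuous_id).matrix_trace.measurable).comp
              measurable_matrix_inv)).neg
      exact (h1.mul h2).mul h3
    rw [integral_muM_eq d _ hmeas2]
    set G : Mat d → ℝ := fun x => (l.det ^ α * m.det ^ β) *
      (x.det ^ (-(α + β)) * Real.exp (-((l + m) * x⁻¹).trace)) with hG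
    have hstep1 : Set.EqOn
        (fun u => wfun d (symOfUpper d u) * ((symOfUpper d u * l⁻¹).det ^ (-α) *
          (symOfUpper d u * m⁻¹).det ^ (-β) *
          Real.exp (-((l * (symOfUpper d u)⁻¹).trace + (m * (symOfUpper d u)⁻¹).trace))))
        (fun u => wfun d (symOfUpper d u) * G (symOfUpper d u)) (PDS d) := by
      intro u hu
      have hpd : (symOfUpper d u).PosDef := hu
      simp only [hG]
      rw [Matrix.det_mul, Matrix.det_mul,
        det_inv_mul_rpow_neg hpd hld α, det_inv_mul_rpow_neg hpd hmd β,
        Matrix.add_mul, Matrix.trace_add,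
        show -(α + β) = -α + -β from by ring, Real.rpow_add hpd.det_pos]
      ring
    rw [setIntegral_congr_fun (isOpen_PDS d).measurableSet hstep1, keyB G]
    have hstep2 : Set.EqOn (fun u => wfun d (symOfUpper d u) * G ((symOfUpper d u)⁻¹))
        (fun u => (l.det ^ α * m.det ^ β) * (wfun d (symOfUpper d u) *
          ((symOfUpper d u).det ^ (α + β) *
            Real.exp (-(symOfUpper d u * (l + m)).trace)))) (PDS d) := by
      intro u hu
      have hpd : (symOfUpper d u).PosDef := hu
      simp only [hG]
      rw [Matrix.nonsing_inv_nonsing_inv _ (isUnit_det_of_posDef hpd),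
        inv_det_rpow_neg hpd.det_pos (α + β), Matrix.trace_mul_comm]
      ring
    rw [setIntegral_congr_fun (isOpen_PDS d).measurableSet hstep2,
      MeasureTheory.integral_const_mul, keyA (α + β) hb, ← GammaD_eq]
    ring
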